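/- There exists a constant d > 0 (depending only on n and a) such that the following holds. Let 𝓜 be a finite set of n×n primitive row-stochastic matrices with strictly positive diagonals and rational entries representable with at most μ bits, with τ(M) < 1/2 for every M ∈ 𝓜; let a ∈ ℚⁿ, let M₁, …, M_T ∈ 𝓜, and let θ = (k₁ < … < k_m) be an increasing sequence in {1,…,T}. If θ contains n+1 indices j₀ < j₁ < … < j_n with j_i ≥ dμ·j_{i−1} for each i ∈ {1,…,n}, then property U holds for θ: there exists a rational vector u ∈ ℚ^m with 𝟙ᵀu = 1 such that xᵀM^{(θ)}u does not depend on x as x ranges over the standard simplex, where M^{(θ)} is the n×m matrix whose i-th column is M₁⋯M_{k_i}·a. -/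

import Mathlib

/-- A matrix is row-stochastic if all its entries are nonnegative
and each row sums to 1. -/
def RowStochastic {n : ℕ} (M : Matrix (Fin n) (Fin n) ℝ) : Prop :=
  (∀ i j, 0 ≤ M i j) ∧ ∀ i, ∑ j, M i j = 1

/-- The coefficient of ergodicity τ(M): half the maximum ℓ₁-distance
between two rows of M. -/
noncomputable def ergCoeff {n : ℕ} (M : Matrix (Fin n) (Fin n) ℝ) : ℝ :=
  (1 / 2) * ⨆ p : Fin n × Fin n, ∑ k, |M p.1 k - M p.2 k|

/-- A matrix is primitive if some positive power of it has all entries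
strictly positive. -/
def IsPrimitive {n : ℕ} (M : Matrix (Fin n) (Fin n) ℝ) : Prop :=
  ∃ m : ℕ, 0 < m ∧ ∀ i j, 0 < (M ^ m) i j

/-- A real number is a rational representable with at most μ bits:
a ratio of integers each of absolute value at most 2^μ. -/
def BitsBounded (μ : ℕ) (x : ℝ) : Prop :=
  ∃ p q : ℤ, q ≠ 0 ∧ |p| ≤ 2 ^ μ ∧ |q| ≤ 2 ^ μ ∧ x = (p : ℝ) / (q : ℝ)

/-- The product M₁⋯M_k, where `M j` denotes M_{j+1}. -/
noncomputable def prodUpTo {n : ℕ} (M : ℕ → Matrix (Fin n) (Fin n) ℝ) (k : ℕ) :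
    Matrix (Fin n) (Fin n) ℝ :=
  (List.ofFn fun j : Fin k => M j).prod

/-- Property U for the sequence θ = (k₁ < … < k_m): there is a rational
vector u with 𝟙ᵀu = 1 such that xᵀM^{(θ)}u does not depend on x ∈ 𝕊,
where the i-th column of M^{(θ)} is M₁⋯M_{k_i}·a. -/
def PropertyU {n m : ℕ} (M : ℕ → Matrix (Fin n) (Fin n) ℝ) (a : Fin n → ℚ)
    (θ : Fin m → ℕ) : Prop :=
  ∃ u : Fin m → ℚ, (∑ i, u i) = 1 ∧
    ∀ x y : Fin n → ℝ, x ∈ stdSimplex ℝ (Fin n) → y ∈ stdSimplex ℝ (Fin n) →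
      (∑ i, (u i : ℝ) *
          (∑ j, x j * (prodUpTo M (θ i)).mulVec (fun l => (a l : ℝ)) j)) =
      (∑ i, (u i : ℝ) *
          (∑ j, y j * (prodUpTo M (θ i)).mulVec (fun l => (a l : ℝ)) j))

namespace FactOne

/-- `x` is a rational with denominator dividing `D`. -/
def Den (D : ℕ) (x : ℚ) : Prop := ∃ z : ℤ, x * D = z

lemma Den.sub {D : ℕ} {x y : ℚ} (hx : Den D x) (hy : Den D y) : Den D (x - y) := by
  obtain ⟨z, hz⟩ := hx; obtain ⟨v, hv⟩ := hy
  exact ⟨z - v, by rw [sub_mul, hz, hv]; push_cast; ring⟩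

lemma Den.mul {D E : ℕ} {x y : ℚ} (hx : Den D x) (hy : Den E y) : Den (D * E) (x * y) := by
  obtain ⟨z, hz⟩ := hx; obtain ⟨v, hv⟩ := hy
  refine ⟨z * v, ?_⟩
  have : x * y * ((D : ℚ) * E) = (x * D) * (y * E) := by ring
  rw [Nat.cast_mul, this, hz, hv]; push_cast; ring

lemma Den.sum {ι : Type*} (s : Finset ι) {D : ℕ} {f : ι → ℚ}
    (h : ∀ i ∈ s, Den D (f i)) : Den D (∑ i ∈ s, f i) := by
  classical
  induction s using Finset.induction_on with
  | empty => exact ⟨0, by simp⟩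
  | @insert a s' ha ih =>
    obtain ⟨z, hz⟩ := h a (Finset.mem_insert_self _ _)
    obtain ⟨v, hv⟩ := ih (fun i hi => h i (Finset.mem_insert_of_mem hi))
    exact ⟨z + v, by rw [Finset.sum_insert ha, add_mul, hz, hv]; push_cast; ring⟩

lemma Den.mono {D R : ℕ} {x : ℚ} (h : Den D x) : Den (D * R) x := by
  obtain ⟨z, hz⟩ := h
  exact ⟨z * R, by rw [Nat.cast_mul, ← mul_assoc, hz]; push_cast; ring⟩

lemma Den.rat (q : ℚ) : Den q.den q := ⟨q.num, Rat.mul_den_eq_num q⟩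

lemma abs_det_le {r : ℕ} (A : Matrix (Fin r) (Fin r) ℚ) (β : Fin r → ℚ)
    (h : ∀ p q, |A p q| ≤ β q) : |A.det| ≤ (r.factorial : ℚ) * ∏ q, β q := by
  rw [Matrix.det_apply]
  calc |∑ σ : Equiv.Perm (Fin r), Equiv.Perm.sign σ • ∏ i, A (σ i) i|
      ≤ ∑ σ : Equiv.Perm (Fin r), |Equiv.Perm.sign σ • ∏ i, A (σ i) i| :=
        Finset.abs_sum_le_sum_abs _ _
    _ ≤ ∑ _σ : Equiv.Perm (Fin r), ∏ q, β q := by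
        refine Finset.sum_le_sum fun σ _ => ?_
        have h1 : |Equiv.Perm.sign σ • ∏ i, A (σ i) i| = |∏ i, A (σ i) i| := by
          rcases Int.units_eq_one_or (Equiv.Perm.sign σ) with h1 | h1 <;>
            simp [h1, Units.smul_def, abs_neg]
        rw [h1, Finset.abs_prod]
        exact Finset.prod_le_prod (fun q _ => abs_nonneg _) (fun q _ => h _ q)
    _ = (r.factorial : ℚ) * ∏ q, β q := by
        rw [Finset.sum_const, Finset.card_univ, Fintype.card_perm, Fintype.card_fin,
          nsmul_eq_mul]

lemma li_of_notmem {n : ℕ} (w : ℕ → (Fin n → ℚ)) :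
    ∀ K : ℕ, (∀ kk, kk < K → w kk ∉ Submodule.span ℚ (Set.range fun l : Fin kk => w l.val)) →
    LinearIndependent ℚ (fun l : Fin K => w l.val) := by
  intro K
  induction K with
  | zero => intro _; exact linearIndependent_empty_type
  | succ K ih =>
    intro h
    have hfam : (fun l : Fin (K + 1) => w l.val)
        = Fin.snoc (fun l : Fin K => w l.val) (w K) := by
      funext l
      refine Fin.lastCases ?_ ?_ l
      · simp
      · intro l'; simp
    rw [hfam, linearIndependent_fin_snoc]
    exact ⟨ih (fun kk hkk => h kk (by omega)), h K (by omega)⟩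

lemma sum_fin_ext {N r : ℕ} (hr : r ≤ N) (f : ℕ → ℚ) (hf : ∀ k, r ≤ k → f k = 0) :
    (∑ t : Fin N, f t.val) = ∑ l : Fin r, f l.val := by
  rw [Fin.sum_univ_eq_sum_range, Fin.sum_univ_eq_sum_range]
  refine (Finset.sum_subset (Finset.range_subset_range.2 hr) fun k _hk hk2 => ?_).symm
  exact hf k (by simpa using hk2)

end FactOne

section H2
open FactOne
variable {n : ℕ}

lemma prodUpTo_zero (M : ℕ → Matrix (Fin n) (Fin n) ℝ) : prodUpTo M 0 = 1 := by
  simp [prodUpTo]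

lemma prodUpTo_succ_left (M : ℕ → Matrix (Fin n) (Fin n) ℝ) (k : ℕ) :
    prodUpTo M (k + 1) = M 0 * prodUpTo (fun j => M (j + 1)) k := by
  simp [prodUpTo, List.ofFn_succ]

lemma erg_rowdiff {N : Matrix (Fin n) (Fin n) ℝ} (h : ergCoeff N < 1 / 2) (p q : Fin n) :
    ∑ s, |N p s - N q s| ≤ 1 := by
  have hb : BddAbove (Set.range fun pr : Fin n × Fin n => ∑ s, |N pr.1 s - N pr.2 s|) :=
    (Set.finite_range _).bddAbove
  have h1 : (∑ s, |N p s - N q s|) ≤ ⨆ pr : Fin n × Fin n, ∑ s, |N pr.1 s - N pr.2 s| :=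
    le_ciSup hb (p, q)
  have h2 : (⨆ pr : Fin n × Fin n, ∑ s, |N pr.1 s - N pr.2 s|) = 2 * ergCoeff N := by
    rw [ergCoeff]; ring
  rw [h2] at h1
  linarith

lemma step_osc (hn : 1 ≤ n) (N : Matrix (Fin n) (Fin n) ℝ) (hrs : RowStochastic N)
    (hτ : ∀ p q, ∑ s, |N p s - N q s| ≤ 1) (v : Fin n → ℝ) (γ : ℝ) (hγ : 0 ≤ γ)
    (hv : ∀ p q, v p - v q ≤ γ) (p q : Fin n) :
    N.mulVec v p - N.mulVec v q ≤ γ / 2 := by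
  have hne : (Finset.univ : Finset (Fin n)).Nonempty := by
    refine ⟨⟨0, by omega⟩, Finset.mem_univ _⟩
  obtain ⟨pmax, -, hmax⟩ := Finset.exists_max_image Finset.univ v hne
  obtain ⟨pmin, -, hmin⟩ := Finset.exists_max_image Finset.univ (fun s => -v s) hne
  have hminle : ∀ s, v pmin ≤ v s := fun s => by
    have := hmin s (Finset.mem_univ s); linarith
  have hd0 : ∑ s, (N p s - N q s) = 0 := by
    rw [Finset.sum_sub_distrib, hrs.2 p, hrs.2 q]; ring
  have hstep : N.mulVec v p - N.mulVec v q = ∑ s, (N p s - N q s) * (v s - v pmin) := by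
    simp only [Matrix.mulVec, dotProduct]
    rw [Finset.sum_congr rfl fun s _ => (by ring :
      (N p s - N q s) * (v s - v pmin) = N p s * v s - N q s * v s - (N p s - N q s) * v pmin)]
    rw [Finset.sum_sub_distrib, Finset.sum_sub_distrib, ← Finset.sum_mul, hd0]
    ring
  rw [hstep]
  have hterm : ∀ s, (N p s - N q s) * (v s - v pmin)
      ≤ max (N p s - N q s) 0 * (v pmax - v pmin) := by
    intro s
    rcases le_or_gt 0 (N p s - N q s) with hcase | hcase
    · rw [max_eq_left hcase]
      exact mul_le_mul_of_nonneg_left (by have := hmax s (Finset.mem_univ s); linarith) hcase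
    · rw [max_eq_right hcase.le]
      have h1 : v s - v pmin ≥ 0 := by have := hminle s; linarith
      nlinarith
  calc ∑ s, (N p s - N q s) * (v s - v pmin)
      ≤ ∑ s, max (N p s - N q s) 0 * (v pmax - v pmin) :=
        Finset.sum_le_sum fun s _ => hterm s
    _ = (∑ s, max (N p s - N q s) 0) * (v pmax - v pmin) := by rw [Finset.sum_mul]
    _ ≤ (1 / 2) * γ := by
        have hposle : (∑ s, max (N p s - N q s) 0) ≤ 1 / 2 := by
          have hmx : ∀ s, max (N p s - N q s) 0 = ((N p s - N q s) + |N p s - N q s|) / 2 := by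
            intro s
            rcases le_or_gt 0 (N p s - N q s) with hh | hh
            · rw [max_eq_left hh, abs_of_nonneg hh]; ring
            · rw [max_eq_right hh.le, abs_of_neg hh]; ring
          rw [Finset.sum_congr rfl fun s _ => hmx s]
          rw [← Finset.sum_div, Finset.sum_add_distrib, hd0]
          have := hτ p q
          linarith
        have hvv : 0 ≤ v pmax - v pmin := by have := hminle pmax; linarith
        have hvγ : v pmax - v pmin ≤ γ := hv pmax pmin
        have hpos0 : 0 ≤ ∑ s, max (N p s - N q s) 0 :=
          Finset.sum_nonneg fun s _ => le_max_right _ _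
        nlinarith
    _ = γ / 2 := by ring

lemma osc_decay (hn : 1 ≤ n) (a : Fin n → ℝ) (γ : ℝ) (hγ : 0 ≤ γ) :
    ∀ (k : ℕ) (M : ℕ → Matrix (Fin n) (Fin n) ℝ),
      (∀ j, j < k → RowStochastic (M j)) →
      (∀ j, j < k → ∀ p q, ∑ s, |M j p s - M j q s| ≤ 1) →
      (∀ p q, a p - a q ≤ γ) →
      ∀ p q, (prodUpTo M k).mulVec a p - (prodUpTo M k).mulVec a q ≤ γ / 2 ^ k := by
  intro k
  induction k with
  | zero =>
    intro M _ _ ha p q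
    rw [prodUpTo_zero, Matrix.one_mulVec]
    simpa using ha p q
  | succ k ih =>
    intro M hrs hτ ha p q
    rw [prodUpTo_succ_left, ← Matrix.mulVec_mulVec]
    have hstep := step_osc hn (M 0) (hrs 0 (by omega)) (hτ 0 (by omega))
      ((prodUpTo (fun j => M (j + 1)) k).mulVec a) (γ / 2 ^ k)
      (by positivity)
      (ih (fun j => M (j + 1)) (fun j hj => hrs (j + 1) (by omega))
        (fun j hj => hτ (j + 1) (by omega)) ha) p q
    calc _ ≤ γ / 2 ^ k / 2 := hstep
      _ = γ / 2 ^ (k + 1) := by rw [pow_succ]; ring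

end H2

section H3
open FactOne
variable {n : ℕ}

lemma matrix_rat {μ : ℕ} (N : Matrix (Fin n) (Fin n) ℝ)
    (h : ∀ p q, BitsBounded μ (N p q)) :
    ∃ (Q : Matrix (Fin n) (Fin n) ℚ) (E : ℕ), 0 < E ∧ E ≤ 2 ^ (μ * (n * n)) ∧
      (∀ p q, N p q = (Q p q : ℝ)) ∧ ∀ p q, Den E (Q p q) := by
  choose zp zq hq0 _hzp hzq heq using h
  refine ⟨fun p q => (zp p q : ℚ) / (zq p q : ℚ),
    ∏ pq : Fin n × Fin n, (zq pq.1 pq.2).natAbs, ?_, ?_, ?_, ?_⟩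
  · exact Finset.prod_pos fun pq _ => Int.natAbs_pos.2 (hq0 _ _)
  · calc ∏ pq : Fin n × Fin n, (zq pq.1 pq.2).natAbs
        ≤ ∏ _pq : Fin n × Fin n, 2 ^ μ := by
          refine Finset.prod_le_prod' fun pq _ => ?_
          have := hzq pq.1 pq.2
          have h2 : ((zq pq.1 pq.2).natAbs : ℤ) ≤ ((2 ^ μ : ℕ) : ℤ) := by
            rw [← Int.abs_eq_natAbs]; push_cast; exact this
          exact_mod_cast h2
      _ = 2 ^ (μ * (n * n)) := by
          rw [Finset.prod_const, Finset.card_univ, Fintype.card_prod, Fintype.card_fin,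
            ← pow_mul]
  · intro p q; rw [heq p q]; push_cast; ring
  · intro p q
    obtain ⟨R, hR⟩ : ∃ R : ℕ, (∏ pq : Fin n × Fin n, (zq pq.1 pq.2).natAbs)
        = (zq p q).natAbs * R :=
      ⟨∏ pq ∈ Finset.univ.erase (p, q), (zq pq.1 pq.2).natAbs,
        (Finset.mul_prod_erase _ _ (Finset.mem_univ (p, q))).symm⟩
    rw [hR]
    have hq : (zq p q : ℚ) ≠ 0 := Int.cast_ne_zero.2 (hq0 p q)
    rcases Int.natAbs_eq (zq p q) with hcase | hcase
    · refine ⟨zp p q * R, ?_⟩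
      have hna : ((zq p q).natAbs : ℚ) = (zq p q : ℚ) := by
        rw [Nat.cast_natAbs]
        exact_mod_cast abs_of_nonneg (show (0:ℤ) ≤ zq p q by omega)
      push_cast [hna]
      field_simp
    · refine ⟨-(zp p q * R), ?_⟩
      have hna : ((zq p q).natAbs : ℚ) = -(zq p q : ℚ) := by
        rw [Nat.cast_natAbs]
        exact_mod_cast abs_of_nonpos (show (zq p q:ℤ) ≤ 0 by omega)
      push_cast [hna]
      field_simp

lemma prod_den {μ : ℕ} : ∀ (k : ℕ) (M : ℕ → Matrix (Fin n) (Fin n) ℝ),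
    (∀ j, j < k → ∀ p q, BitsBounded μ (M j p q)) →
    ∃ (Q : Matrix (Fin n) (Fin n) ℚ) (E : ℕ), 0 < E ∧ E ≤ 2 ^ (μ * (n * n) * k) ∧
      (∀ p q, prodUpTo M k p q = (Q p q : ℝ)) ∧ ∀ p q, Den E (Q p q) := by
  intro k
  induction k with
  | zero =>
    intro M _
    refine ⟨1, 1, one_pos, by simp, ?_, ?_⟩
    · intro p q; rw [prodUpTo_zero]
      by_cases hpq : p = q <;> simp [Matrix.one_apply, hpq]
    · intro p q
      by_cases hpq : p = q
      · exact ⟨1, by simp [Matrix.one_apply, hpq]⟩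
      · exact ⟨0, by simp [Matrix.one_apply, hpq]⟩
  | succ k ih =>
    intro M hM
    obtain ⟨Q0, E0, hE0, hE0b, hQ0, hd0⟩ := matrix_rat (M 0) (fun p q => hM 0 (by omega) p q)
    obtain ⟨Q1, E1, hE1, hE1b, hQ1, hd1⟩ :=
      ih (fun j => M (j + 1)) (fun j hj p q => hM (j + 1) (by omega) p q)
    refine ⟨Q0 * Q1, E0 * E1, Nat.mul_pos hE0 hE1, ?_, ?_, ?_⟩
    · calc E0 * E1 ≤ 2 ^ (μ * (n * n)) * 2 ^ (μ * (n * n) * k) := Nat.mul_le_mul hE0b hE1b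
        _ = 2 ^ (μ * (n * n) * (k + 1)) := by rw [← pow_add]; congr 1; ring
    · intro p q
      rw [prodUpTo_succ_left, Matrix.mul_apply, Matrix.mul_apply]
      push_cast
      exact Finset.sum_congr rfl fun l _ => by rw [hQ0 p l, hQ1 l q]
    · intro p q
      rw [Matrix.mul_apply]
      exact Den.sum _ fun l _ => Den.mul (hd0 p l) (hd1 l q)

end H3

section H4
open FactOne
variable {n : ℕ}

set_option maxHeartbeats 1600000 in
lemma core (hn : 1 ≤ n) (w : ℕ → Fin n → ℚ) (D : ℕ → ℕ) (hD : ∀ l, l ≤ n → 0 < D l)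
    (hden : ∀ l, l ≤ n → ∀ k, Den (D l) (w l k))
    (B : ℚ) (hB : 1 ≤ B) (ε : ℕ → ℚ)
    (hwε : ∀ l, l ≤ n → ∀ k, |w l k| ≤ ε l)
    (hεB : ∀ l, l ≤ n → ε l ≤ B)
    (DD : ℕ → ℕ) (hDD : ∀ i, i < n → ∀ l, l ≤ i → D l ≤ DD i)
    (hsmall : ∀ i, i < n →
      ((n : ℚ) + 1) ^ 2 * ((n + 1).factorial : ℚ) * ((n : ℚ) * B ^ 2) ^ n *
        ((n : ℚ) * B) * ((DD i : ℚ)) ^ (2 * n) * ε (i + 1) < 1) :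
    ∃ u : Fin (n + 1) → ℚ, (∑ l, u l) = 1 ∧ ∀ k, (∑ l, u l * w l.val k) = 0 := by
  classical
  have hB0 : (0 : ℚ) < B := lt_of_lt_of_le one_pos hB
  set Qp : ℕ → Prop := fun r => w r ∈ Submodule.span ℚ (Set.range fun l : Fin r => w l.val)
    with hQdef
  have hexn : ∃ r, Qp r ∧ r ≤ n := by
    by_contra hcon
    push_neg at hcon
    have hli : LinearIndependent ℚ (fun l : Fin (n + 1) => w l.val) := by
      apply li_of_notmem
      intro kk hkk hmem
      have := hcon kk hmem
      omega
    have hcard := hli.fintype_card_le_finrank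
    rw [Module.finrank_fintype_fun_eq_card, Fintype.card_fin, Fintype.card_fin] at hcard
    omega
  have hexQ : ∃ r, Qp r := ⟨hexn.choose, hexn.choose_spec.1⟩
  obtain ⟨r, hQr, hrn, hmin⟩ : ∃ r, Qp r ∧ r ≤ n ∧ ∀ m, m < r → ¬ Qp m :=
    ⟨Nat.find hexQ, Nat.find_spec hexQ,
      le_trans (Nat.find_min' hexQ hexn.choose_spec.1) hexn.choose_spec.2,
      fun m hm => Nat.find_min hexQ hm⟩
  set g : Fin r → (Fin n → ℚ) := fun l => w l.val with hgdef
  have hgli : LinearIndependent ℚ g := li_of_notmem w r hmin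
  obtain ⟨c, hc⟩ := (Submodule.mem_span_range_iff_exists_fun ℚ).mp hQr
  have hck : ∀ k, (∑ l, c l * g l k) = w r k := by
    intro k
    have := congrFun hc k
    simpa [Finset.sum_apply, smul_eq_mul] using this
  -- the sum bound
  have hcb : (∑ l : Fin r, |c l|) < 1 := by
    rcases Nat.eq_zero_or_pos r with hr0 | hrpos
    · rw [Finset.sum_eq_zero (fun l _ => absurd l.2 (by omega))]; norm_num
    · set i : ℕ := r - 1 with hidef
      have hir : i + 1 = r := by omega
      have hin : i < n := by omega
      set G : Matrix (Fin r) (Fin r) ℚ := fun p q => ∑ k, g p k * g q k with hGdef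
      set bv : Fin r → ℚ := fun p => ∑ k, g p k * w r k with hbvdef
      have hmul : ∀ (v : Fin r → ℚ) (p : Fin r),
          G.mulVec v p = ∑ k, g p k * (∑ q, v q * g q k) := by
        intro v p
        calc G.mulVec v p = ∑ q, (∑ k, g p k * g q k) * v q := by
              simp only [Matrix.mulVec, dotProduct, hGdef]
          _ = ∑ q, ∑ k, g p k * g q k * v q := by
              exact Finset.sum_congr rfl fun q _ => Finset.sum_mul _ _ _
          _ = ∑ k, ∑ q, g p k * g q k * v q := Finset.sum_comm
          _ = ∑ k, g p k * (∑ q, v q * g q k) := by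
              refine Finset.sum_congr rfl fun k _ => ?_
              rw [Finset.mul_sum]
              exact Finset.sum_congr rfl fun q _ => by ring
      have hGc : G.mulVec c = bv := by
        funext p
        rw [hmul c p, hbvdef]
        exact Finset.sum_congr rfl fun k _ => by rw [hck k]
      have hdet : G.det ≠ 0 := by
        intro h0
        obtain ⟨v, hv0, hv⟩ := Matrix.exists_mulVec_eq_zero_iff.mpr h0
        set hcomb : Fin n → ℚ := fun k => ∑ q, v q * g q k with hcombdef
        have h2 : ∑ p, v p * (∑ k, g p k * hcomb k) = 0 := by
          rw [Finset.sum_congr rfl (fun p _ => by rw [← hmul v p])]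
          rw [Finset.sum_congr rfl (fun p _ => by rw [congrFun hv p])]
          simp
        have h3 : ∑ k, hcomb k * hcomb k = 0 := by
          rw [← h2]
          calc ∑ k, hcomb k * hcomb k = ∑ k, (∑ q, v q * g q k) * hcomb k := rfl
            _ = ∑ k, ∑ q, v q * g q k * hcomb k := by
                exact Finset.sum_congr rfl fun k _ => Finset.sum_mul _ _ _
            _ = ∑ q, ∑ k, v q * g q k * hcomb k := Finset.sum_comm
            _ = ∑ p, v p * (∑ k, g p k * hcomb k) := by
                refine Finset.sum_congr rfl fun p _ => ?_
                rw [Finset.mul_sum]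
                exact Finset.sum_congr rfl fun k _ => by ring
        have h4 : ∀ k, hcomb k = 0 := by
          intro k
          have := (Finset.sum_eq_zero_iff_of_nonneg
            (fun k _ => mul_self_nonneg (hcomb k))).mp h3 k (Finset.mem_univ k)
          exact mul_self_eq_zero.mp this
        have h5 : ∀ q, v q = 0 := by
          refine Fintype.linearIndependent_iff.mp hgli v ?_
          funext k
          have := h4 k
          simpa [Finset.sum_apply, smul_eq_mul, hcombdef] using this
        exact hv0 (funext h5)
      -- integer scaling of the Gram determinant
      choose Z hZ using fun (l : Fin r) (k : Fin n) => hden l.val (by omega) k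
      set Gz : Matrix (Fin r) (Fin r) ℤ := fun p q => ∑ k, Z p k * Z q k with hGzdef
      set Dpn : ℕ := ∏ l : Fin r, D l.val with hDpdef
      have hDpn1 : 1 ≤ Dpn := Finset.one_le_prod' fun l _ => hD l.val (by omega)
      set Dp : ℚ := (Dpn : ℚ) with hDpq
      have hDp1 : 1 ≤ Dp := Nat.one_le_cast.mpr hDpn1
      have hDp0 : 0 < Dp := lt_of_lt_of_le one_pos hDp1
      have hGz : ∀ p q, ((Gz p q : ℤ) : ℚ) = (D p.val : ℚ) * (D q.val : ℚ) * G p q := by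
        intro p q
        rw [hGzdef, hGdef]
        push_cast
        rw [Finset.mul_sum]
        refine Finset.sum_congr rfl fun k _ => ?_
        rw [← hZ p k, ← hZ q k]
        ring
      have hmat : (Gz.map (Int.cast : ℤ → ℚ))
          = Matrix.diagonal (fun l : Fin r => (D l.val : ℚ)) * G *
            Matrix.diagonal (fun l : Fin r => (D l.val : ℚ)) := by
        ext p q
        rw [Matrix.map_apply, Matrix.mul_diagonal, Matrix.diagonal_mul]
        rw [show ((Int.cast : ℤ → ℚ) (Gz p q)) = ((Gz p q : ℤ) : ℚ) from rfl, hGz p q]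
        ring
      have hdetz : ((Gz.det : ℤ) : ℚ) = Dp ^ 2 * G.det := by
        have h6 := RingHom.map_det (Int.castRingHom ℚ) Gz
        rw [RingHom.mapMatrix_apply, Int.coe_castRingHom] at h6
        calc ((Gz.det : ℤ) : ℚ) = (Gz.map (Int.cast : ℤ → ℚ)).det := h6
          _ = Dp ^ 2 * G.det := by
              rw [hmat, Matrix.det_mul, Matrix.det_mul, Matrix.det_diagonal, hDpq, hDpdef]
              push_cast
              ring
      have hGzne : Gz.det ≠ 0 := by
        intro h0
        apply hdet
        have : (0 : ℚ) = Dp ^ 2 * G.det := by rw [← hdetz, h0]; simp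
        have hDp2 : Dp ^ 2 ≠ 0 := by positivity
        exact (mul_eq_zero.mp this.symm).resolve_left hDp2
      have hdetlow : 1 ≤ Dp ^ 2 * |G.det| := by
        have h7 : (1 : ℚ) ≤ |((Gz.det : ℤ) : ℚ)| := by
          have := Int.one_le_abs hGzne
          exact_mod_cast this
        rw [hdetz, abs_mul, abs_of_pos (by positivity : (0:ℚ) < Dp ^ 2)] at h7
        exact h7
      -- bounds on the entries
      have hεr : 0 ≤ ε r := le_trans (abs_nonneg _) (hwε r hrn ⟨0, by omega⟩)
      have hgB : ∀ (l : Fin r) (k : Fin n), |g l k| ≤ B := fun l k =>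
        le_trans (hwε l.val (by omega) k) (hεB l.val (by omega))
      have hGbound : ∀ p q, |G p q| ≤ (n : ℚ) * B ^ 2 := by
        intro p q
        calc |∑ k, g p k * g q k| ≤ ∑ k, |g p k * g q k| := Finset.abs_sum_le_sum_abs _ _
          _ ≤ ∑ _k : Fin n, B ^ 2 := by
              refine Finset.sum_le_sum fun k _ => ?_
              rw [abs_mul, sq]
              exact mul_le_mul (hgB p k) (hgB q k) (abs_nonneg _) (le_of_lt hB0)
          _ = (n : ℚ) * B ^ 2 := by
              rw [Finset.sum_const, Finset.card_univ, Fintype.card_fin, nsmul_eq_mul]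
      have hbbound : ∀ p, |bv p| ≤ (n : ℚ) * B * ε r := by
        intro p
        calc |∑ k, g p k * w r k| ≤ ∑ k, |g p k * w r k| := Finset.abs_sum_le_sum_abs _ _
          _ ≤ ∑ _k : Fin n, B * ε r := by
              refine Finset.sum_le_sum fun k _ => ?_
              rw [abs_mul]
              exact mul_le_mul (hgB p k) (hwε r hrn k) (abs_nonneg _) (le_of_lt hB0)
          _ = (n : ℚ) * B * ε r := by
              rw [Finset.sum_const, Finset.card_univ, Fintype.card_fin, nsmul_eq_mul]; ring
      -- Cramer's rule
      have hcram : ∀ l, c l = (G.det)⁻¹ * Matrix.cramer G bv l := by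
        have h1 : G.mulVec ((G.det)⁻¹ • Matrix.cramer G bv) = bv := by
          rw [Matrix.mulVec_smul, Matrix.mulVec_cramer, smul_smul,
            inv_mul_cancel₀ hdet, one_smul]
        have hker : c - (G.det)⁻¹ • Matrix.cramer G bv = 0 := by
          by_contra hne
          apply hdet
          apply Matrix.exists_mulVec_eq_zero_iff.mp
          refine ⟨c - (G.det)⁻¹ • Matrix.cramer G bv, hne, ?_⟩
          rw [Matrix.mulVec_sub, hGc, h1, sub_self]
        intro l
        have := congrFun hker l
        simp only [Pi.sub_apply, Pi.smul_apply, smul_eq_mul, Pi.zero_apply, sub_eq_zero] at this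
        exact this
      have hdetinv : |(G.det)⁻¹| ≤ Dp ^ 2 := by
        have habs : 0 < |G.det| := abs_pos.mpr hdet
        rw [abs_inv]
        have h8 : |G.det|⁻¹ * 1 ≤ |G.det|⁻¹ * (Dp ^ 2 * |G.det|) :=
          mul_le_mul_of_nonneg_left hdetlow (by positivity)
        rw [mul_one] at h8
        calc |G.det|⁻¹ ≤ |G.det|⁻¹ * (Dp ^ 2 * |G.det|) := h8
          _ = Dp ^ 2 * (|G.det|⁻¹ * |G.det|) := by ring
          _ = Dp ^ 2 := by rw [inv_mul_cancel₀ (ne_of_gt habs), mul_one]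
      have hcl : ∀ l, |c l| ≤ ((r.factorial : ℚ) * (((n : ℚ) * B * ε r) *
          ((n : ℚ) * B ^ 2) ^ (r - 1))) * Dp ^ 2 := by
        intro l
        rw [hcram l, abs_mul]
        have hupd : |(G.updateCol l bv).det| ≤ (r.factorial : ℚ) *
            (((n : ℚ) * B * ε r) * ((n : ℚ) * B ^ 2) ^ (r - 1)) := by
          have hβ := abs_det_le (G.updateCol l bv)
            (Function.update (fun _ : Fin r => (n : ℚ) * B ^ 2) l ((n : ℚ) * B * ε r)) ?_
          · rw [Finset.prod_update_of_mem (Finset.mem_univ l)] at hβ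
            rw [Finset.prod_const] at hβ
            have hcard : (Finset.univ \ {l} : Finset (Fin r)).card = r - 1 := by
              rw [Finset.card_sdiff_of_subset (Finset.singleton_subset_iff.mpr (Finset.mem_univ l)),
                Finset.card_singleton, Finset.card_univ, Fintype.card_fin]
            rw [hcard] at hβ
            exact hβ
          · intro p q
            rw [Matrix.updateCol_apply, Function.update_apply]
            by_cases hq : q = l
            · simp only [hq, if_pos rfl]; exact hbbound p
            · simp only [hq, if_neg hq, if_false]; exact hGbound p q
        rw [Matrix.cramer_apply]
        calc |(G.det)⁻¹| * |(G.updateCol l bv).det|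
            ≤ Dp ^ 2 * ((r.factorial : ℚ) * (((n : ℚ) * B * ε r) *
              ((n : ℚ) * B ^ 2) ^ (r - 1))) :=
              mul_le_mul hdetinv hupd (abs_nonneg _) (by positivity)
          _ = _ := by ring
      -- assemble
      have hDpDD : Dp ≤ ((DD i : ℚ)) ^ n := by
        have hDD1 : 1 ≤ DD i := le_trans (hD 0 (by omega)) (hDD i hin 0 (by omega))
        have hnat : Dpn ≤ DD i ^ n := by
          calc Dpn ≤ ∏ _l : Fin r, DD i := by
                refine Finset.prod_le_prod' fun l _ => ?_
                refine hDD i hin l.val ?_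
                omega
            _ = DD i ^ r := by rw [Finset.prod_const, Finset.card_univ, Fintype.card_fin]
            _ ≤ DD i ^ n := Nat.pow_le_pow_right hDD1 hrn
        rw [hDpq]
        exact_mod_cast hnat
      have hone_nB2 : (1 : ℚ) ≤ (n : ℚ) * B ^ 2 := by
        have hn1 : (1 : ℚ) ≤ (n : ℚ) := by exact_mod_cast hn
        nlinarith
      have hfac : (r.factorial : ℚ) ≤ ((n + 1).factorial : ℚ) := by
        exact_mod_cast Nat.factorial_le (by omega)
      have hsum_le : (∑ l : Fin r, |c l|) ≤ (r : ℚ) * ((r.factorial : ℚ) *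
          (((n : ℚ) * B * ε r) * ((n : ℚ) * B ^ 2) ^ (r - 1))) * Dp ^ 2 := by
        calc (∑ l : Fin r, |c l|) ≤ ∑ _l : Fin r, ((r.factorial : ℚ) *
              (((n : ℚ) * B * ε r) * ((n : ℚ) * B ^ 2) ^ (r - 1))) * Dp ^ 2 :=
              Finset.sum_le_sum fun l _ => hcl l
          _ = (r : ℚ) * ((r.factorial : ℚ) *
              (((n : ℚ) * B * ε r) * ((n : ℚ) * B ^ 2) ^ (r - 1))) * Dp ^ 2 := by
              rw [Finset.sum_const, Finset.card_univ, Fintype.card_fin, nsmul_eq_mul]; ring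
      have hfinal : (r : ℚ) * ((r.factorial : ℚ) *
          (((n : ℚ) * B * ε r) * ((n : ℚ) * B ^ 2) ^ (r - 1))) * Dp ^ 2
          ≤ ((n : ℚ) + 1) ^ 2 * ((n + 1).factorial : ℚ) * ((n : ℚ) * B ^ 2) ^ n *
            ((n : ℚ) * B) * ((DD i : ℚ)) ^ (2 * n) * ε (i + 1) := by
        rw [hir]
        have hr1 : (r : ℚ) ≤ ((n : ℚ) + 1) ^ 2 := by
          have : (r : ℚ) ≤ (n : ℚ) + 1 := by exact_mod_cast (by omega : r ≤ n + 1)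
          nlinarith [Nat.cast_nonneg (α := ℚ) n]
        have hpow : ((n : ℚ) * B ^ 2) ^ (r - 1) ≤ ((n : ℚ) * B ^ 2) ^ n :=
          pow_le_pow_right₀ hone_nB2 (by omega)
        have hDp2 : Dp ^ 2 ≤ ((DD i : ℚ)) ^ (2 * n) := by
          calc Dp ^ 2 ≤ (((DD i : ℚ)) ^ n) ^ 2 := by nlinarith [hDp0.le, hDpDD]
            _ = ((DD i : ℚ)) ^ (2 * n) := by rw [← pow_mul]; congr 1; ring
        have h0r : (0:ℚ) ≤ (r:ℚ) := Nat.cast_nonneg r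
        have h0f : (0:ℚ) ≤ (r.factorial : ℚ) := Nat.cast_nonneg _
        have h0nB : (0:ℚ) ≤ (n:ℚ) * B := by positivity
        have h0nB2 : (0:ℚ) ≤ ((n : ℚ) * B ^ 2) ^ (r-1) := by positivity
        calc (r : ℚ) * ((r.factorial : ℚ) * (((n : ℚ) * B * ε r) *
              ((n : ℚ) * B ^ 2) ^ (r - 1))) * Dp ^ 2
            = (r : ℚ) * (r.factorial : ℚ) * ((n : ℚ) * B ^ 2) ^ (r - 1) *
              ((n : ℚ) * B) * Dp ^ 2 * ε r := by ring
          _ ≤ ((n : ℚ) + 1) ^ 2 * ((n + 1).factorial : ℚ) * ((n : ℚ) * B ^ 2) ^ n *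
              ((n : ℚ) * B) * ((DD i : ℚ)) ^ (2 * n) * ε r := by
              have m1 : (r : ℚ) * (r.factorial : ℚ)
                  ≤ ((n : ℚ) + 1) ^ 2 * ((n + 1).factorial : ℚ) :=
                mul_le_mul hr1 hfac h0f (by positivity)
              have m2 : (r : ℚ) * (r.factorial : ℚ) * ((n : ℚ) * B ^ 2) ^ (r - 1)
                  ≤ ((n : ℚ) + 1) ^ 2 * ((n + 1).factorial : ℚ) * ((n : ℚ) * B ^ 2) ^ n :=
                mul_le_mul m1 hpow h0nB2 (by positivity)
              have m3 := mul_le_mul_of_nonneg_right m2 h0nB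
              have h0A : (0:ℚ) ≤ ((n : ℚ) + 1) ^ 2 * ((n + 1).factorial : ℚ) *
                  ((n : ℚ) * B ^ 2) ^ n * ((n : ℚ) * B) := by
                have : (0:ℚ) ≤ ((n : ℚ) + 1) ^ 2 * ((n + 1).factorial : ℚ) *
                    ((n : ℚ) * B ^ 2) ^ n := by positivity
                exact mul_nonneg this h0nB
              have m4 := mul_le_mul m3 hDp2 (by positivity : (0:ℚ) ≤ Dp ^ 2) h0A
              exact mul_le_mul_of_nonneg_right m4 hεr
          _ = _ := rfl
      calc (∑ l : Fin r, |c l|) ≤ _ := hsum_le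
        _ ≤ _ := hfinal
        _ < 1 := hsmall i hin
  -- construct u
  clear hQr hexn hexQ
  clear_value Qp
  clear hmin hQdef Qp
  obtain ⟨s, hsdef⟩ : ∃ s : ℚ, s = ∑ l : Fin r, c l := ⟨_, rfl⟩
  have hs1 : |s| < 1 := by
    rw [hsdef]
    exact lt_of_le_of_lt (Finset.abs_sum_le_sum_abs _ _) hcb
  have hs2 : (1 : ℚ) - s ≠ 0 := by
    intro h
    rw [sub_eq_zero] at h
    rw [← h] at hs1
    simp at hs1
  obtain ⟨cN, hcNdef⟩ : ∃ cN : ℕ → ℚ, cN = fun k => if h : k < r then c ⟨k, h⟩ else 0 :=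
    ⟨_, rfl⟩
  have hcN0 : ∀ k, r ≤ k → cN k = 0 := fun k hk => by rw [hcNdef]; exact dif_neg (by omega)
  have hcNlt : ∀ l : Fin r, cN l.val = c l := fun l => by
    rw [hcNdef]; simp only [dif_pos l.2]
  obtain ⟨rF, hrFval⟩ : ∃ rF : Fin (n + 1), rF.val = r := ⟨⟨r, by omega⟩, rfl⟩
  refine ⟨fun t => ((if t = rF then (1:ℚ) else 0) - cN t.val) / (1 - s), ?_, ?_⟩
  · rw [← Finset.sum_div]
    rw [Finset.sum_sub_distrib]
    have e1 : (∑ t : Fin (n + 1), (if t = rF then (1:ℚ) else 0)) = 1 := by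
      simp
    have e2 : (∑ t : Fin (n + 1), cN t.val) = s := by
      rw [sum_fin_ext (by omega : r ≤ n + 1) cN hcN0]
      rw [hsdef]
      exact Finset.sum_congr rfl fun l _ => hcNlt l
    rw [e1, e2]
    field_simp
  · intro k
    have e1 : (∑ t : Fin (n + 1), (if t = rF then (1:ℚ) else 0) * w t.val k) = w r k := by
      have hsplit : ∀ t : Fin (n + 1), (if t = rF then (1:ℚ) else 0) * w t.val k
          = (if t = rF then w t.val k else 0) := by
        intro t; split <;> simp
      rw [Finset.sum_congr rfl fun t _ => hsplit t,
        Finset.sum_ite_eq' Finset.univ rF (fun t => w t.val k)]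
      simp [hrFval]
    have e2 : (∑ t : Fin (n + 1), cN t.val * w t.val k) = w r k := by
      rw [sum_fin_ext (by omega : r ≤ n + 1) (fun t => cN t * w t k)
        (fun t ht => by show cN t * w t k = 0; rw [hcN0 t ht, zero_mul])]
      rw [← hck k]
      exact Finset.sum_congr rfl fun l _ => by rw [hcNlt l]
    rw [Finset.sum_congr rfl (fun t _ => div_mul_eq_mul_div _ _ _), ← Finset.sum_div]
    rw [Finset.sum_congr rfl (fun t _ => sub_mul (if t = rF then (1:ℚ) else 0) (cN t.val) (w t.val k))]
    rw [Finset.sum_sub_distrib, e1, e2, sub_self, zero_div]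
end H4

section H5
open FactOne

set_option maxHeartbeats 1600000 in
theorem property_U_of_geometric_indices' {n : ℕ} (hn : 1 ≤ n) (a : Fin n → ℚ) :
    ∃ d : ℝ, 0 < d ∧
      ∀ (μ : ℕ), 1 ≤ μ →
      ∀ (𝓜 : Finset (Matrix (Fin n) (Fin n) ℝ)),
        (∀ M ∈ 𝓜, RowStochastic M) →
        (∀ M ∈ 𝓜, ∀ i j, BitsBounded μ (M i j)) →
        (∀ M ∈ 𝓜, ergCoeff M < 1 / 2) →
      ∀ (T : ℕ), 0 < T →
      ∀ (M : ℕ → Matrix (Fin n) (Fin n) ℝ), (∀ j < T, M j ∈ 𝓜) →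
      ∀ (m : ℕ) (θ : Fin m → ℕ), StrictMono θ → (∀ i, 1 ≤ θ i ∧ θ i ≤ T) →
        (∃ j : Fin (n + 1) → ℕ,
          (∀ i, ∃ t : Fin m, θ t = j i) ∧ StrictMono j ∧
          ∀ i : Fin n, d * (μ : ℝ) * (j i.castSucc : ℝ) ≤ (j i.succ : ℝ)) →
        ∃ u : Fin m → ℚ, (∑ i, u i) = 1 ∧
          ∀ x y : Fin n → ℝ, x ∈ stdSimplex ℝ (Fin n) → y ∈ stdSimplex ℝ (Fin n) →
            (∑ i, (u i : ℝ) *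
                (∑ k, x k * (prodUpTo M (θ i)).mulVec (fun l => (a l : ℝ)) k)) =
            (∑ i, (u i : ℝ) *
                (∑ k, y k * (prodUpTo M (θ i)).mulVec (fun l => (a l : ℝ)) k)) := by
  classical
  have hk0 : 0 < n := hn
  obtain ⟨k0, hk0v⟩ : ∃ k0 : Fin n, k0.val = 0 := ⟨⟨0, hk0⟩, rfl⟩
  obtain ⟨αq, hαq⟩ : ∃ αq : ℚ, αq = ∑ l, |a l| := ⟨_, rfl⟩
  have hα0 : (0 : ℚ) ≤ αq := hαq ▸ Finset.sum_nonneg fun l _ => abs_nonneg _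
  obtain ⟨B, hBdef⟩ : ∃ B : ℚ, B = 2 * αq + 1 := ⟨_, rfl⟩
  have hB1 : (1 : ℚ) ≤ B := by rw [hBdef]; linarith
  have hB0 : (0 : ℚ) < B := lt_of_lt_of_le one_pos hB1
  obtain ⟨Aden, hAdendef⟩ : ∃ Aden : ℕ, Aden = ∏ l, (a l).den := ⟨_, rfl⟩
  have hAden1 : 1 ≤ Aden := hAdendef ▸ Finset.one_le_prod' fun l _ => (a l).pos
  have hda : ∀ s : Fin n, Den Aden (a s) := by
    intro s
    obtain ⟨R, hR⟩ : ∃ R : ℕ, Aden = (a s).den * R :=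
      ⟨∏ l ∈ Finset.univ.erase s, (a l).den,
        by rw [hAdendef]; exact (Finset.mul_prod_erase _ _ (Finset.mem_univ s)).symm⟩
    rw [hR]
    exact Den.mono (Den.rat (a s))
  obtain ⟨C0, hC0def⟩ : ∃ C0 : ℚ, C0 = ((n : ℚ) + 1) ^ 2 * ((n + 1).factorial : ℚ) *
      ((n : ℚ) * B ^ 2) ^ n * ((n : ℚ) * B) := ⟨_, rfl⟩
  have hC0pos : 0 < C0 := by
    rw [hC0def]
    have h1 : (0 : ℚ) < (n : ℚ) := by exact_mod_cast hn
    have h2 : (0 : ℚ) < ((n + 1).factorial : ℚ) := by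
      exact_mod_cast (n + 1).factorial_pos
    positivity
  obtain ⟨N0, hN0def⟩ : ∃ N0 : ℕ, N0 = (⌈C0 * B⌉₊ + 1) * Aden ^ (2 * n) + 1 := ⟨_, rfl⟩
  refine ⟨2 * (n : ℝ) ^ 3 + (N0 : ℝ) + 1, by positivity, ?_⟩
  intro μ hμ 𝓜 hRS hbits herg T hT M hM m θ hθmono hθrange hex
  obtain ⟨j, hjθ, hjmono, hjgap⟩ := hex
  choose tfun htfun using hjθ
  have hjT : ∀ l : Fin (n + 1), j l ≤ T := fun l => by
    rw [← htfun l]; exact (hθrange (tfun l)).2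
  have hj1 : ∀ l : Fin (n + 1), 1 ≤ j l := fun l => by
    rw [← htfun l]; exact (hθrange (tfun l)).1
  have hPD : ∀ l : Fin (n + 1), ∃ (Q : Matrix (Fin n) (Fin n) ℚ) (E : ℕ),
      0 < E ∧ E ≤ 2 ^ (μ * (n * n) * (j l)) ∧
      (∀ p q, prodUpTo M (j l) p q = (Q p q : ℝ)) ∧ ∀ p q, Den E (Q p q) := fun l =>
    prod_den (j l) M (fun jj hjj p q => hbits _ (hM jj (lt_of_lt_of_le hjj (hjT l))) p q)
  choose Qf Ef hEpos hEbound hQcast hQden using hPD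
  -- real/rational bridge
  have hVcast : ∀ (l : Fin (n + 1)) (k : Fin n),
      (prodUpTo M (j l)).mulVec (fun s => (a s : ℝ)) k = (((Qf l).mulVec a k : ℚ) : ℝ) := by
    intro l k
    simp only [Matrix.mulVec, dotProduct]
    push_cast
    exact Finset.sum_congr rfl fun s _ => by rw [hQcast l k s]
  -- oscillation decay
  have haosc : ∀ p q : Fin n, (a p : ℝ) - (a q : ℝ) ≤ 2 * (αq : ℝ) := by
    intro p q
    have h1 : |a p| ≤ αq := by
      rw [hαq]
      exact Finset.single_le_sum (f := fun l => |a l|) (fun l _ => abs_nonneg _)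
        (Finset.mem_univ p)
    have h2 : |a q| ≤ αq := by
      rw [hαq]
      exact Finset.single_le_sum (f := fun l => |a l|) (fun l _ => abs_nonneg _)
        (Finset.mem_univ q)
    have h3 : a p - a q ≤ 2 * αq := by
      have h4 := abs_le.mp h1
      have h5 := abs_le.mp h2
      linarith [h4.1, h4.2, h5.1, h5.2]
    exact_mod_cast h3
  have hosc : ∀ (l : Fin (n + 1)) (p q : Fin n),
      (prodUpTo M (j l)).mulVec (fun s => (a s : ℝ)) p
        - (prodUpTo M (j l)).mulVec (fun s => (a s : ℝ)) q ≤ (2 * (αq : ℝ)) / 2 ^ (j l) := by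
    intro l
    exact osc_decay hn (fun s => (a s : ℝ)) (2 * (αq : ℝ)) (by positivity) (j l) M
      (fun jj hjj => hRS _ (hM jj (lt_of_lt_of_le hjj (hjT l))))
      (fun jj hjj p q => erg_rowdiff (herg _ (hM jj (lt_of_lt_of_le hjj (hjT l)))) p q)
      haosc
  -- data for the core lemma
  obtain ⟨wq, hwqdef⟩ : ∃ wq : ℕ → Fin n → ℚ, ∀ (l' : ℕ) (h : l' ≤ n) (k : Fin n),
      wq l' k = (Qf ⟨l', by omega⟩).mulVec a k - (Qf ⟨l', by omega⟩).mulVec a k0 :=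
    ⟨fun l' => if h : l' ≤ n then
        (fun k => (Qf ⟨l', by omega⟩).mulVec a k - (Qf ⟨l', by omega⟩).mulVec a k0) else 0,
      fun l' h k => congrFun (dif_pos h) k⟩
  obtain ⟨Df, hDfdef⟩ : ∃ Df : ℕ → ℕ,
      ∀ (l' : ℕ) (h : l' ≤ n), Df l' = Aden * Ef ⟨l', by omega⟩ :=
    ⟨fun l' => if h : l' ≤ n then Aden * Ef ⟨l', by omega⟩ else 1,
      fun l' h => dif_pos h⟩
  have hDfpos : ∀ l', l' ≤ n → 0 < Df l' := fun l' h => by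
    rw [hDfdef l' h]; exact Nat.mul_pos (by omega) (hEpos _)
  obtain ⟨jNf, hjNdef⟩ : ∃ jNf : ℕ → ℕ, ∀ (l' : ℕ) (h : l' ≤ n), jNf l' = j ⟨l', by omega⟩ :=
    ⟨fun l' => if h : l' ≤ n then j ⟨l', by omega⟩ else 1, fun l' h => dif_pos h⟩
  obtain ⟨εf, hεdef⟩ : ∃ εf : ℕ → ℚ, ∀ l', εf l' = B / 2 ^ (jNf l') := ⟨_, fun _ => rfl⟩
  obtain ⟨DDf, hDDdef⟩ : ∃ DDf : ℕ → ℕ, ∀ i', DDf i' = Aden * 2 ^ (μ * (n * n) * (jNf i')) :=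
    ⟨_, fun _ => rfl⟩
  -- hypotheses of the core lemma
  have hden : ∀ l, l ≤ n → ∀ k, Den (Df l) (wq l k) := by
    intro l hl k
    rw [hwqdef l hl k, hDfdef l hl]
    have hv : ∀ k' : Fin n, Den (Aden * Ef ⟨l, by omega⟩) ((Qf ⟨l, by omega⟩).mulVec a k') := by
      intro k'
      have h1 : (Qf ⟨l, by omega⟩).mulVec a k' = ∑ s, Qf ⟨l, by omega⟩ k' s * a s := rfl
      rw [h1]
      refine Den.sum _ fun s _ => ?_
      have h2 := Den.mul (hda s) (hQden ⟨l, by omega⟩ k' s)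
      have h3 : Aden * Ef ⟨l, by omega⟩ = Aden * Ef ⟨l, by omega⟩ := rfl
      have h4 : a s * Qf ⟨l, by omega⟩ k' s = Qf ⟨l, by omega⟩ k' s * a s := mul_comm _ _
      rw [← h4]
      exact h2
    exact Den.sub (hv k) (hv k0)
  have hwε : ∀ l, l ≤ n → ∀ k, |wq l k| ≤ εf l := by
    intro l hl k
    rw [hwqdef l hl k, hεdef l, hjNdef l hl]
    set L : Fin (n + 1) := ⟨l, by omega⟩
    have h1 := hosc L k k0
    have h2 := hosc L k0 k
    rw [hVcast L k, hVcast L k0] at h1 h2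
    have hreal : |(((Qf L).mulVec a k - (Qf L).mulVec a k0 : ℚ) : ℝ)|
        ≤ (((B / 2 ^ (j L)) : ℚ) : ℝ) := by
      push_cast
      rw [abs_sub_le_iff]
      have h2a : (2 * (αq : ℝ)) / 2 ^ (j L) ≤ (B : ℝ) / 2 ^ (j L) := by
        apply div_le_div_of_nonneg_right ?_ (by positivity)
        have : (2 * αq : ℚ) ≤ B := by rw [hBdef]; linarith
        exact_mod_cast this
      constructor <;> linarith
    exact_mod_cast hreal
  have hεB : ∀ l, l ≤ n → εf l ≤ B := fun l hl => by
    rw [hεdef l]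
    exact div_le_self hB0.le (one_le_pow₀ (by norm_num))
  have hDDle : ∀ i, i < n → ∀ l, l ≤ i → Df l ≤ DDf i := by
    intro i hi l hl
    rw [hDfdef l (by omega), hDDdef i, hjNdef i (by omega)]
    refine Nat.mul_le_mul_left Aden ?_
    calc Ef ⟨l, by omega⟩ ≤ 2 ^ (μ * (n * n) * (j ⟨l, by omega⟩)) := hEbound _
      _ ≤ 2 ^ (μ * (n * n) * (j ⟨i, by omega⟩)) := by
          refine Nat.pow_le_pow_right (by norm_num) ?_
          refine Nat.mul_le_mul_left _ ?_
          exact hjmono.monotone (by exact Fin.mk_le_mk.mpr hl)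
  have hsmall : ∀ i, i < n →
      ((n : ℚ) + 1) ^ 2 * ((n + 1).factorial : ℚ) * ((n : ℚ) * B ^ 2) ^ n *
        ((n : ℚ) * B) * ((DDf i : ℚ)) ^ (2 * n) * εf (i + 1) < 1 := by
    intro i hi
    rw [← hC0def, hDDdef i, hεdef (i + 1), hjNdef i (by omega), hjNdef (i + 1) (by omega)]
    have hgap := hjgap ⟨i, hi⟩
    have hcs : Fin.castSucc (⟨i, hi⟩ : Fin n) = (⟨i, by omega⟩ : Fin (n + 1)) := rfl
    have hsc : Fin.succ (⟨i, hi⟩ : Fin n) = (⟨i + 1, by omega⟩ : Fin (n + 1)) := rfl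
    obtain ⟨J0, hJ0⟩ : ∃ J0, j (⟨i, by omega⟩ : Fin (n + 1)) = J0 := ⟨_, rfl⟩
    obtain ⟨J1, hJ1⟩ : ∃ J1, j (⟨i + 1, by omega⟩ : Fin (n + 1)) = J1 := ⟨_, rfl⟩
    rw [hJ0, hJ1]
    rw [hcs, hsc, hJ0, hJ1] at hgap
    have hJ01 : 1 ≤ J0 := hJ0 ▸ hj1 _
    have hJnat : μ * (n * n) * J0 * (2 * n) + N0 ≤ J1 := by
      have hμ1 : (1 : ℝ) ≤ (μ : ℝ) * (J0 : ℝ) := by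
        have h1 : (1 : ℝ) ≤ (μ : ℝ) := by exact_mod_cast hμ
        have h2 : (1 : ℝ) ≤ (J0 : ℝ) := by exact_mod_cast hJ01
        nlinarith
      have h3 : (N0 : ℝ) * 1 ≤ (N0 : ℝ) * ((μ : ℝ) * (J0 : ℝ)) :=
        mul_le_mul_of_nonneg_left hμ1 (Nat.cast_nonneg _)
      rw [← Nat.cast_le (α := ℝ)]
      push_cast
      nlinarith [hgap, h3, hμ1]
    have hC0B : C0 * B * (Aden : ℚ) ^ (2 * n) < 2 ^ N0 := by
      have hA1 : (1 : ℚ) ≤ (Aden : ℚ) ^ (2 * n) := one_le_pow₀ (by exact_mod_cast hAden1)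
      have s1 : C0 * B * (Aden : ℚ) ^ (2 * n) ≤ (⌈C0 * B⌉₊ : ℚ) * (Aden : ℚ) ^ (2 * n) :=
        mul_le_mul_of_nonneg_right (Nat.le_ceil _) (by positivity)
      have s2 : (⌈C0 * B⌉₊ : ℚ) * (Aden : ℚ) ^ (2 * n) < (N0 : ℚ) := by
        rw [hN0def]
        push_cast
        nlinarith [hA1]
      have s3 : (N0 : ℚ) < 2 ^ N0 := by
        have := Nat.lt_two_pow_self (n := N0)
        exact_mod_cast this
      linarith
    have key : C0 * B * (Aden : ℚ) ^ (2 * n) * 2 ^ (μ * (n * n) * J0 * (2 * n))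
        < 2 ^ J1 := by
      calc C0 * B * (Aden : ℚ) ^ (2 * n) * 2 ^ (μ * (n * n) * J0 * (2 * n))
          < 2 ^ N0 * 2 ^ (μ * (n * n) * J0 * (2 * n)) :=
            mul_lt_mul_of_pos_right hC0B (by positivity)
        _ = 2 ^ (μ * (n * n) * J0 * (2 * n) + N0) := by rw [← pow_add]; ring_nf
        _ ≤ 2 ^ J1 := pow_le_pow_right₀ one_le_two hJnat
    have hexpand : C0 * (((Aden * 2 ^ (μ * (n * n) * J0) : ℕ) : ℚ)) ^ (2 * n) *
        (B / 2 ^ J1) = (C0 * B * (Aden : ℚ) ^ (2 * n) *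
          2 ^ (μ * (n * n) * J0 * (2 * n))) / 2 ^ J1 := by
      push_cast
      rw [mul_pow, ← pow_mul]
      ring
    rw [hexpand, div_lt_one (by positivity)]
    exact key
  obtain ⟨u0, hu0sum, hu0zero⟩ := core hn wq Df hDfpos hden B hB1 εf hwε hεB DDf hDDle hsmall
  have hwql : ∀ (l : Fin (n + 1)) (k : Fin n),
      wq l.val k = (Qf l).mulVec a k - (Qf l).mulVec a k0 := fun l k =>
    hwqdef l.val (by omega) k
  have hconst : ∀ k : Fin n, (∑ l : Fin (n + 1), u0 l * (Qf l).mulVec a k)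
      = ∑ l : Fin (n + 1), u0 l * (Qf l).mulVec a k0 := by
    intro k
    have h0 := hu0zero k
    have h1 : (∑ l : Fin (n + 1), u0 l * wq l.val k)
        = (∑ l : Fin (n + 1), u0 l * (Qf l).mulVec a k)
          - ∑ l : Fin (n + 1), u0 l * (Qf l).mulVec a k0 := by
      rw [← Finset.sum_sub_distrib]
      exact Finset.sum_congr rfl fun l _ => by rw [hwql l k]; ring
    rw [h1] at h0
    exact sub_eq_zero.mp h0
  refine ⟨fun t => ∑ l : Fin (n + 1), (if tfun l = t then u0 l else 0), ?_, ?_⟩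
  · rw [Finset.sum_comm]
    rw [Finset.sum_congr rfl fun l (_ : l ∈ Finset.univ) =>
      Finset.sum_ite_eq Finset.univ (tfun l) (fun _ => u0 l)]
    simpa using hu0sum
  · intro x y hx hy
    have key : ∀ z : Fin n → ℝ, z ∈ stdSimplex ℝ (Fin n) →
        (∑ t, ((∑ l : Fin (n + 1), if tfun l = t then u0 l else 0 : ℚ) : ℝ) *
          (∑ k, z k * (prodUpTo M (θ t)).mulVec (fun s => (a s : ℝ)) k))
        = ((∑ l : Fin (n + 1), u0 l * (Qf l).mulVec a k0 : ℚ) : ℝ) := by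
      intro z hz
      have hzsum : ∑ k, z k = 1 := hz.2
      have hsplit : ∀ (l : Fin (n + 1)) (t : Fin m),
          (if tfun l = t then ((u0 l : ℚ) : ℝ) else 0) *
            (∑ k, z k * (prodUpTo M (θ t)).mulVec (fun s => (a s : ℝ)) k)
          = if tfun l = t then ((u0 l : ℚ) : ℝ) *
              (∑ k, z k * (prodUpTo M (θ t)).mulVec (fun s => (a s : ℝ)) k) else 0 := by
        intro l t; split <;> simp
      calc (∑ t, ((∑ l : Fin (n + 1), if tfun l = t then u0 l else 0 : ℚ) : ℝ) *
            (∑ k, z k * (prodUpTo M (θ t)).mulVec (fun s => (a s : ℝ)) k))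
          = ∑ t, ∑ l : Fin (n + 1), (if tfun l = t then ((u0 l : ℚ) : ℝ) else 0) *
            (∑ k, z k * (prodUpTo M (θ t)).mulVec (fun s => (a s : ℝ)) k) := by
            refine Finset.sum_congr rfl fun t _ => ?_
            rw [← Finset.sum_mul]
            congr 1
            push_cast
            exact Finset.sum_congr rfl fun l _ => by split <;> simp
        _ = ∑ l : Fin (n + 1), ∑ t, (if tfun l = t then ((u0 l : ℚ) : ℝ) *
            (∑ k, z k * (prodUpTo M (θ t)).mulVec (fun s => (a s : ℝ)) k) else 0) := by
            rw [Finset.sum_comm]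
            exact Finset.sum_congr rfl fun l _ => Finset.sum_congr rfl fun t _ => hsplit l t
        _ = ∑ l : Fin (n + 1), ((u0 l : ℚ) : ℝ) *
            (∑ k, z k * (prodUpTo M (θ (tfun l))).mulVec (fun s => (a s : ℝ)) k) := by
            refine Finset.sum_congr rfl fun l _ => ?_
            rw [Finset.sum_ite_eq Finset.univ (tfun l)]
            simp
        _ = ∑ l : Fin (n + 1), ((u0 l : ℚ) : ℝ) *
            (∑ k, z k * (((Qf l).mulVec a k : ℚ) : ℝ)) := by
            refine Finset.sum_congr rfl fun l _ => ?_
            rw [htfun l]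
            congr 1
            exact Finset.sum_congr rfl fun k _ => by rw [hVcast l k]
        _ = ∑ k, z k * ((∑ l : Fin (n + 1), u0 l * (Qf l).mulVec a k : ℚ) : ℝ) := by
            have h1 : ∀ l : Fin (n + 1), ((u0 l : ℚ) : ℝ) *
                (∑ k, z k * (((Qf l).mulVec a k : ℚ) : ℝ))
                = ∑ k, z k * (((u0 l : ℚ) : ℝ) * (((Qf l).mulVec a k : ℚ) : ℝ)) := by
              intro l
              rw [Finset.mul_sum]
              exact Finset.sum_congr rfl fun k _ => by ring
            rw [Finset.sum_congr rfl fun l _ => h1 l, Finset.sum_comm]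
            refine Finset.sum_congr rfl fun k _ => ?_
            rw [← Finset.mul_sum]
            congr 1
            push_cast
            rfl
        _ = ∑ k, z k * ((∑ l : Fin (n + 1), u0 l * (Qf l).mulVec a k0 : ℚ) : ℝ) :=
            Finset.sum_congr rfl fun k _ => by rw [hconst k]
        _ = ((∑ l : Fin (n + 1), u0 l * (Qf l).mulVec a k0 : ℚ) : ℝ) := by
            rw [← Finset.sum_mul, hzsum, one_mul]
    rw [key x hx, key y hy]

end H5

/-- Fact 1 of the paper: there is a constant d > 0, depending only on n and a,
such that for matrices M₁,…,M_T drawn from a finite set 𝓜 of primitive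
row-stochastic matrices with positive diagonals, μ-bit rational entries and
τ < 1/2, any increasing sequence θ in {1,…,T} that contains n+1 indices
j₀ < j₁ < … < j_n with j_i ≥ dμ·j_{i−1} for each i satisfies property U. -/
theorem property_U_of_geometric_indices {n : ℕ} (hn : 1 ≤ n) (a : Fin n → ℚ) :
    ∃ d : ℝ, 0 < d ∧
      ∀ (μ : ℕ), 1 ≤ μ →
      ∀ (𝓜 : Finset (Matrix (Fin n) (Fin n) ℝ)),
        (∀ M ∈ 𝓜, RowStochastic M) →
        (∀ M ∈ 𝓜, IsPrimitive M) →
        (∀ M ∈ 𝓜, ∀ i, 0 < M i i) →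
        (∀ M ∈ 𝓜, ∀ i j, BitsBounded μ (M i j)) →
        (∀ M ∈ 𝓜, ergCoeff M < 1 / 2) →
      ∀ (T : ℕ), 0 < T →
      ∀ (M : ℕ → Matrix (Fin n) (Fin n) ℝ), (∀ j < T, M j ∈ 𝓜) →
      ∀ (m : ℕ) (θ : Fin m → ℕ), StrictMono θ → (∀ i, 1 ≤ θ i ∧ θ i ≤ T) →
        (∃ j : Fin (n + 1) → ℕ,
          (∀ i, ∃ t : Fin m, θ t = j i) ∧ StrictMono j ∧
          ∀ i : Fin n, d * (μ : ℝ) * (j i.castSucc : ℝ) ≤ (j i.succ : ℝ)) →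
        PropertyU M a θ := by
  obtain ⟨d, hd, H⟩ := property_U_of_geometric_indices' hn a
  exact ⟨d, hd, fun μ hμ 𝓜 hRS _ _ hbits herg T hT M hM m θ h1 h2 hex =>
    H μ hμ 𝓜 hRS hbits herg T hT M hM m θ h1 h2 hex⟩
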